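/- Let v_1,...,v_m ∈ ℤⁿ be a spanning configuration of vectors such that some maximal linearly independent subset {v_{i_1},...,v_{i_n}} does not generate ℤⁿ as a group (i.e., the matrix with these columns has |determinant| ≥ 2). Then there exists a ∈ (1/2)ℤⁿ such that for every x ∈ ℤⁿ, there is some j with |⟨a + x, v_j⟩| ≥ 1. -/

import Mathlib

open Matrix Finset

lemma key (n : ℕ) (N : Matrix (Fin n) (Fin n) ℤ) (hdet : 2 ≤ |N.det|) :
    ∃ t : Fin n → ℤ, ∀ x : Fin n → ℤ, ∃ k, 2 ≤ |(N *ᵥ (t + (2:ℤ) • x)) k| := by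
  classical
  have hdet0 : N.det ≠ 0 := by intro h; rw [h] at hdet; norm_num at hdet
  set L : Submodule ℤ (Fin n → ℤ) := LinearMap.range N.mulVecLin with hLdef
  have memL : ∀ w, w ∈ L ↔ ∃ x, N *ᵥ x = w := by
    intro w; simp [hLdef, LinearMap.mem_range, Matrix.mulVecLin_apply]
  let LK : Fin n → Submodule ℤ (Fin n → ℤ) := fun k =>
    L ⊓ (⨅ (j : Fin n) (_ : j < k), LinearMap.ker (LinearMap.proj j))
  have memLK : ∀ (k : Fin n) (w : Fin n → ℤ), w ∈ LK k ↔ (w ∈ L ∧ ∀ j < k, w j = 0) := by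
    intro k w
    simp [LK, Submodule.mem_inf, Submodule.mem_iInf, LinearMap.mem_ker]
  let IK : Fin n → Submodule ℤ ℤ := fun k => (LK k).map (LinearMap.proj k)
  have memIK : ∀ (k : Fin n) (a : ℤ), a ∈ IK k ↔ ∃ w, w ∈ LK k ∧ w k = a := by
    intro k a
    simp [IK, Submodule.mem_map]
  have hdetK : ∀ k, N.det ∈ IK k := by
    intro k
    rw [memIK]
    refine ⟨N.det • Pi.single k 1, ?_, by simp⟩
    rw [memLK]
    refine ⟨?_, ?_⟩
    · rw [memL]
      refine ⟨N.adjugate *ᵥ Pi.single k 1, ?_⟩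
      rw [Matrix.mulVec_mulVec, Matrix.mul_adjugate, Matrix.smul_mulVec,
        Matrix.one_mulVec]
    · intro j hj
      simp [Pi.single_apply, (ne_of_lt hj)]
  have hgen : ∀ k : Fin n, ∃ dk : ℤ, IK k = Submodule.span ℤ {dk} := fun k =>
    (IsPrincipalIdealRing.principal (IK k)).principal
  choose d hd using hgen
  have hd0 : ∀ k, d k ≠ 0 := by
    intro k h
    have := hdetK k
    rw [hd k, Submodule.mem_span_singleton] at this
    obtain ⟨c, hc⟩ := this
    rw [h] at hc
    simp at hc
    exact hdet0 hc.symm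
  have hgex : ∀ k, ∃ w, w ∈ LK k ∧ w k = d k := by
    intro k
    exact (memIK k (d k)).1 (by rw [hd k]; exact Submodule.mem_span_singleton_self (d k))
  choose g hgLK hgk using hgex
  have hgL : ∀ k, g k ∈ L := fun k => ((memLK k (g k)).1 (hgLK k)).1
  have hgz : ∀ k, ∀ j < k, g k j = 0 := fun k => ((memLK k (g k)).1 (hgLK k)).2
  -- generation
  have hgenL : ∀ w ∈ L, ∃ c : Fin n → ℤ, w = ∑ j, c j • g j := by
    have main : ∀ i : ℕ, ∀ w ∈ L, (∀ j : Fin n, (j : ℕ) < n - i → w j = 0) →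
        ∃ c : Fin n → ℤ, w = ∑ j, c j • g j := by
      intro i
      induction i with
      | zero =>
        intro w _ hcoord
        refine ⟨0, ?_⟩
        have hw0 : w = 0 := funext fun j => hcoord j (by omega)
        simp [hw0]
      | succ i ih =>
        intro w hw hcoord
        by_cases hk : n - (i + 1) < n
        · set k : Fin n := ⟨n - (i + 1), hk⟩ with hkdef
          have hwLK : w ∈ LK k := (memLK k w).2 ⟨hw, fun j hj => hcoord j hj⟩
          have hwk : w k ∈ IK k := (memIK k _).2 ⟨w, hwLK, rfl⟩
          rw [hd k, Submodule.mem_span_singleton] at hwk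
          obtain ⟨c0, hc0⟩ := hwk
          have hw' : w - c0 • g k ∈ L :=
            Submodule.sub_mem _ hw (Submodule.smul_mem _ _ (hgL k))
          have hcoord' : ∀ j : Fin n, (j : ℕ) < n - i → (w - c0 • g k) j = 0 := by
            intro j hj
            rcases lt_trichotomy (j : ℕ) (n - (i+1)) with h1 | h1 | h1
            · have hjk : j < k := h1
              simp [hcoord j h1, hgz k j hjk]
            · have hjk : j = k := Fin.ext h1
              subst hjk
              simp [hgk k, ← hc0]
            · omega
          obtain ⟨c, hc⟩ := ih (w - c0 • g k) hw' hcoord'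
          refine ⟨fun j => c j + (if j = k then c0 else 0), ?_⟩
          have hsum : ∑ j, (c j + (if j = k then c0 else 0)) • g j
              = (∑ j, c j • g j) + ∑ j, (if j = k then c0 else 0) • g j := by
            rw [← Finset.sum_add_distrib]
            exact Finset.sum_congr rfl fun j _ => by rw [add_smul]
          have hsingle : ∑ j, (if j = k then c0 else 0) • g j = c0 • g k := by
            rw [Finset.sum_eq_single k]
            · simp
            · intro j _ hj
              simp [hj]
            · intro h; exact absurd (Finset.mem_univ k) h
          rw [hsum, hsingle, ← hc]
          abel
        · refine ⟨0, ?_⟩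
          have hw0 : w = 0 := funext fun j => absurd j.isLt (by omega)
          simp [hw0]
    intro w hw
    exact main n w hw (fun j hj => absurd hj (by omega))
  by_cases hbig : ∃ k, 2 ≤ |d k|
  · -- Case A: some diagonal entry ≥ 2 in absolute value
    obtain ⟨k', hk'⟩ := hbig
    have hS : (Finset.univ.filter (fun k => 2 ≤ |d k|)).Nonempty :=
      ⟨k', by simp [hk']⟩
    set k₀ : Fin n := (Finset.univ.filter (fun k => 2 ≤ |d k|)).min' hS with hk₀def
    have hk₀ : 2 ≤ |d k₀| :=
      (Finset.mem_filter.1 (Finset.min'_mem _ hS)).2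
    have hsmall : ∀ j, j < k₀ → |d j| = 1 := by
      intro j hj
      have hjS : j ∉ Finset.univ.filter (fun k => 2 ≤ |d k|) := by
        intro hjS
        exact absurd (Finset.min'_le _ j hjS) (not_le.2 hj)
      have h2 : ¬ 2 ≤ |d j| := by simpa using hjS
      have h1 : 1 ≤ |d j| := Int.one_le_abs (hd0 j)
      omega
    obtain ⟨t, ht⟩ := (memL (g k₀)).1 (hgL k₀)
    refine ⟨t, ?_⟩
    intro x
    by_contra hcon
    push_neg at hcon
    set w : Fin n → ℤ := N *ᵥ (t + (2:ℤ) • x) with hwdef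
    obtain ⟨c, hc⟩ := hgenL (N *ᵥ x) ((memL _).2 ⟨x, rfl⟩)
    set y : Fin n → ℤ := fun j => (if j = k₀ then 1 else 0) + 2 * c j with hydef
    have hwsum : w = ∑ j, y j • g j := by
      have h1 : w = g k₀ + (2:ℤ) • (N *ᵥ x) := by
        rw [hwdef, Matrix.mulVec_add, ht, Matrix.mulVec_smul]
      rw [h1, hc]
      rw [Finset.smul_sum]
      have h2 : ∑ j, y j • g j = (∑ j, (if j = k₀ then (1:ℤ) else 0) • g j)
          + ∑ j, (2 * c j) • g j := by
        rw [← Finset.sum_add_distrib]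
        exact Finset.sum_congr rfl fun j _ => by rw [hydef, add_smul]
      rw [h2]
      congr 1
      · rw [Finset.sum_eq_single k₀]
        · simp
        · intro j _ hj; simp [hj]
        · intro h; exact absurd (Finset.mem_univ k₀) h
      · exact Finset.sum_congr rfl fun j _ => (mul_smul (2:ℤ) (c j) (g j)).symm
    have hw : ∀ k : Fin n, (∀ j, j < k → y j = 0) → w k = y k * d k := by
      intro k hzero
      rw [hwsum, Finset.sum_apply]
      rw [Finset.sum_eq_single k]
      · rw [Pi.smul_apply, hgk k, smul_eq_mul]
      · intro j _ hj
        rcases lt_or_gt_of_ne hj with h | h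
        · rw [hzero j h, zero_smul, Pi.zero_apply]
        · rw [Pi.smul_apply, hgz j k h, smul_zero]
      · intro h; exact absurd (Finset.mem_univ k) h
    have heven : ∀ k : Fin n, k ≠ k₀ → y k = 2 * c k := by
      intro k hk; simp [hydef, hk]
    have hzero : ∀ i : ℕ, ∀ k : Fin n, (k : ℕ) ≤ i → k < k₀ → y k = 0 := by
      intro i
      induction i with
      | zero =>
        intro k hki hkk₀
        have hwk := hw k (fun j hj => absurd (Fin.lt_def.1 hj) (by omega))
        have h1 := hcon k
        have h2 : |y k| < 2 := by
          have := abs_mul (y k) (d k)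
          rw [← hwk] at this
          rw [this, hsmall k hkk₀, mul_one] at h1
          exact h1
        have h3 := heven k (ne_of_lt hkk₀)
        have h4 := abs_lt.1 h2
        omega
      | succ i ih =>
        intro k hki hkk₀
        have hwk := hw k (fun j hj => ih j (by omega) (lt_trans hj hkk₀))
        have h1 := hcon k
        have h2 : |y k| < 2 := by
          have := abs_mul (y k) (d k)
          rw [← hwk] at this
          rw [this, hsmall k hkk₀, mul_one] at h1
          exact h1
        have h3 := heven k (ne_of_lt hkk₀)
        have h4 := abs_lt.1 h2
        omega
    have hwk₀ := hw k₀ (fun j hj => hzero (j : ℕ) j le_rfl hj)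
    have h1 := hcon k₀
    rw [hwk₀, abs_mul] at h1
    have hodd : y k₀ = 1 + 2 * c k₀ := by simp [hydef]
    have h5 : |y k₀| = 0 := by nlinarith [abs_nonneg (y k₀), abs_nonneg (d k₀)]
    have h6 := abs_eq_zero.1 h5
    omega
  · -- Case B: all diagonal entries are ±1, so L = ⊤, contradiction with det
    exfalso
    push_neg at hbig
    have hdu : ∀ k, d k = 1 ∨ d k = -1 := by
      intro k
      have h1 : 1 ≤ |d k| := Int.one_le_abs (hd0 k)
      have h2 := hbig k
      rcases abs_cases (d k) with ⟨h, _⟩ | ⟨h, _⟩ <;> omega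
    set E : Fin n → Fin n → ℤ := fun k => Pi.single k 1 with hEdef
    have hEs : ∀ k, E k k = 1 := fun k => Pi.single_eq_same k 1
    have hEn : ∀ k j, j ≠ k → E k j = 0 := fun k j h => Pi.single_eq_of_ne h 1
    have hek : ∀ i : ℕ, ∀ k : Fin n, n - i ≤ (k : ℕ) → E k ∈ L := by
      intro i
      induction i with
      | zero => intro k hki; exact absurd k.isLt (by omega)
      | succ i ih =>
        intro k hki
        by_cases hik : n - i ≤ (k : ℕ)
        · exact ih k hik
        · have hrepr : E k = d k • g k
              - ∑ j ∈ Finset.univ.filter (fun j => k < j), (d k * g k j) • E j := by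
            funext p
            rw [Pi.sub_apply, Pi.smul_apply, Finset.sum_apply]
            rcases lt_trichotomy p k with h | h | h
            · rw [hEn k p (ne_of_lt h), hgz k p h, smul_zero]
              have hz : ∀ j ∈ Finset.univ.filter (fun j => k < j),
                  ((d k * g k j) • E j) p = 0 := by
                intro j hj
                have hkj : k < j := (Finset.mem_filter.1 hj).2
                rw [Pi.smul_apply, hEn j p (ne_of_lt (lt_trans h hkj)), smul_zero]
              rw [Finset.sum_congr rfl hz, Finset.sum_const_zero]
              ring
            · subst h
              rw [hEs, hgk, smul_eq_mul]
              have hz : ∀ j ∈ Finset.univ.filter (fun j => p < j),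
                  ((d p * g p j) • E j) p = 0 := by
                intro j hj
                have hkj : p < j := (Finset.mem_filter.1 hj).2
                rw [Pi.smul_apply, hEn j p (ne_of_lt hkj), smul_zero]
              rw [Finset.sum_congr rfl hz, Finset.sum_const_zero]
              rcases hdu p with h | h <;> rw [h] <;> ring
            · rw [hEn k p (ne_of_gt h)]
              rw [Finset.sum_eq_single p]
              · rw [Pi.smul_apply, hEs, smul_eq_mul, smul_eq_mul, mul_one]
                ring
              · intro j hj hjp
                rw [Pi.smul_apply, hEn j p (Ne.symm hjp), smul_zero]
              · intro hp
                exact absurd (Finset.mem_filter.2 ⟨Finset.mem_univ p, h⟩) hp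
          rw [hrepr]
          refine Submodule.sub_mem _ (Submodule.smul_mem _ _ (hgL k)) ?_
          refine Submodule.sum_mem _ ?_
          intro j hj
          have hkj : k < j := (Finset.mem_filter.1 hj).2
          refine Submodule.smul_mem _ _ (ih j ?_)
          have h1 := Fin.lt_def.1 hkj
          have h2 := j.isLt
          omega
    have hsurj : ∀ w : Fin n → ℤ, w ∈ L := by
      intro w
      have hrepr : w = ∑ k, w k • E k := by
        funext p
        rw [Finset.sum_apply, Finset.sum_eq_single p]
        · rw [Pi.smul_apply, hEs, smul_eq_mul, mul_one]
        · intro j _ hj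
          rw [Pi.smul_apply, hEn j p (Ne.symm hj), smul_zero]
        · intro h; exact absurd (Finset.mem_univ p) h
      rw [hrepr]
      exact Submodule.sum_mem _ fun k _ =>
        Submodule.smul_mem _ _ (hek n k (by omega))
    have hxc : ∀ k : Fin n, ∃ x, N *ᵥ x = E k :=
      fun k => (memL _).1 (hsurj _)
    choose xc hxcspec using hxc
    have hNX : N * (Matrix.of fun i k => xc k i) = 1 := by
      ext i k
      have h1 : (N * (Matrix.of fun i k => xc k i)) i k = (N *ᵥ xc k) i := by
        rw [Matrix.mul_apply, Matrix.mulVec]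
        rfl
      rw [h1, hxcspec k, Matrix.one_apply, hEdef]
      simp [Pi.single_apply]
    have hdet1 : N.det * (Matrix.of fun i k => xc k i).det = 1 := by
      rw [← Matrix.det_mul, hNX, Matrix.det_one]
    have hu := Int.isUnit_iff.1 (IsUnit.of_mul_eq_one _ hdet1)
    rcases hu with h | h <;> rw [h] at hdet <;> norm_num at hdet





/-- If a spanning configuration `v 1, ..., v m ∈ ℤⁿ` has a maximal
(i.e. size-`n`) linearly independent subset whose determinant has absolute value ≥ 2,
then some class `a ∈ (1/2)ℤⁿ` has no representative `a + x`, `x ∈ ℤⁿ`, in the open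
polytope `{u : |⟨u, v j⟩| < 1 ∀ j}`. -/
theorem stmt2 (n m : ℕ) (v : Fin m → Fin n → ℤ)
    (hspan : Submodule.span ℝ (Set.range fun j => fun i => (v j i : ℝ)) = ⊤)
    (s : Fin n → Fin m)
    (hindep : LinearIndependent ℝ (fun k => fun i => (v (s k) i : ℝ)))
    (hdet : 2 ≤ |(Matrix.of fun (i : Fin n) (k : Fin n) => v (s k) i).det|) :
    ∃ a : Fin n → ℝ, (∀ i, ∃ k : ℤ, a i = (k : ℝ) / 2) ∧
      ∀ x : Fin n → ℤ, ∃ j, 1 ≤ |∑ i, (a i + (x i : ℝ)) * (v j i : ℝ)| := by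
  have hdetT : 2 ≤ |(Matrix.of fun (i : Fin n) (k : Fin n) => v (s k) i)ᵀ.det| := by
    rw [Matrix.det_transpose]; exact hdet
  obtain ⟨t, htkey⟩ := key n (Matrix.of fun (i : Fin n) (k : Fin n) => v (s k) i)ᵀ hdetT
  refine ⟨fun i => (t i : ℝ) / 2, fun i => ⟨t i, rfl⟩, ?_⟩
  intro x
  obtain ⟨k, hk⟩ := htkey x
  refine ⟨s k, ?_⟩
  have hsum : ((Matrix.of fun (i : Fin n) (k : Fin n) => v (s k) i)ᵀ *ᵥ (t + (2:ℤ) • x)) k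
      = ∑ i, v (s k) i * (t i + 2 * x i) := by
    simp [Matrix.mulVec, dotProduct, Matrix.transpose_apply, Matrix.of_apply,
      Pi.add_apply, Pi.smul_apply, smul_eq_mul]
  rw [hsum] at hk
  have h2 : (2:ℝ) ≤ |((∑ i, v (s k) i * (t i + 2 * x i) : ℤ) : ℝ)| := by
    rw [← Int.cast_abs]
    exact_mod_cast hk
  have heq : ∑ i, ((t i : ℝ) / 2 + (x i : ℝ)) * (v (s k) i : ℝ)
      = ((∑ i, v (s k) i * (t i + 2 * x i) : ℤ) : ℝ) / 2 := by
    push_cast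
    rw [Finset.sum_div]
    refine Finset.sum_congr rfl fun i _ => ?_
    ring
  rw [heq, abs_div]
  rw [abs_of_nonneg (by norm_num : (0:ℝ) ≤ 2)]
  linarith
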